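/- Soundness amplification by k independent repetitions: let V be a finite type with decidable equality and G₁ G₂ : SimpleGraph V with Nonempty (G₁ ≃g G₂), and let k : ℕ. Then for every family of strategies s : Fin k → SimpleGraph V → Bool, the number of tuples p : Fin k → Bool × Equiv.Perm V such that for every round i, s i (SimpleGraph.map (p i).2.toEmbedding (if (p i).1 then G₁ else G₂)) = (p i).1 equals (Fintype.card (Equiv.Perm V))^k; i.e., out of the (2 · |Perm V|)^k equally likely choices of Arthur, Merlin answers all k rounds correctly in exactly a 2^{-k} fraction. -/

import Mathlib

open Finset

lemma map_perm_adj {V : Type*} (G : SimpleGraph V) (π : Equiv.Perm V) (a b : V) :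
    (SimpleGraph.map π.toEmbedding G).Adj a b ↔ G.Adj (π⁻¹ a) (π⁻¹ b) := by
  simp only [SimpleGraph.map_adj]
  constructor
  · rintro ⟨u, v, huv, rfl, rfl⟩
    simpa using huv
  · intro hx
    exact ⟨π⁻¹ a, π⁻¹ b, hx, by simp, by simp⟩

lemma map_perm_iso {V : Type*} (G₁ G₂ : SimpleGraph V) (e : G₁ ≃g G₂)
    (σ : Equiv.Perm V) :
    SimpleGraph.map σ.toEmbedding G₂
      = SimpleGraph.map (σ * e.toEquiv).toEmbedding G₁ := by
  ext a b
  rw [map_perm_adj, map_perm_adj]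
  rw [mul_inv_rev]
  simp only [Equiv.Perm.mul_apply]
  exact (e.symm.map_rel_iff (a := σ⁻¹ a) (b := σ⁻¹ b)).symm

lemma one_round {V : Type*} [Fintype V] [DecidableEq V]
    (G₁ G₂ : SimpleGraph V) (e : G₁ ≃g G₂) (f : SimpleGraph V → Bool) :
    (Finset.univ.filter fun x : Bool × Equiv.Perm V =>
        f (SimpleGraph.map x.2.toEmbedding (if x.1 then G₁ else G₂)) = x.1).card
      = Fintype.card (Equiv.Perm V) := by
  set ε : Equiv.Perm V := e.toEquiv with hε
  rw [Fintype.card]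
  refine Finset.card_bij' (fun x _ => if x.1 then x.2 else x.2 * ε)
    (fun π _ => if f (SimpleGraph.map π.toEmbedding G₁) then (true, π)
      else (false, π * ε⁻¹)) (fun _ _ => Finset.mem_univ _) ?_ ?_ ?_
  · intro π _
    simp only [Finset.mem_filter, Finset.mem_univ, true_and]
    by_cases hf : f (SimpleGraph.map π.toEmbedding G₁) = true
    · simp only [Equiv.coe_toEmbedding] at hf
      simp [hf]
    · rw [if_neg hf]
      have h2 : SimpleGraph.map (π * ε⁻¹).toEmbedding G₂
          = SimpleGraph.map π.toEmbedding G₁ := by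
        rw [map_perm_iso G₁ G₂ e, ← hε, inv_mul_cancel_right]
      simp only [Bool.false_eq_true, if_false, h2]
      simpa using hf
  · rintro ⟨b, σ⟩ hx
    simp only [Finset.mem_filter, Finset.mem_univ, true_and] at hx
    cases b with
    | true =>
      simp only [if_true] at hx ⊢
      simp only [Equiv.coe_toEmbedding] at hx
      simp [hx]
    | false =>
      have hx' : f (SimpleGraph.map σ.toEmbedding G₂) = false := by simpa using hx
      rw [map_perm_iso G₁ G₂ e σ] at hx'
      simp only [Equiv.coe_toEmbedding, Equiv.Perm.coe_mul, ← hε] at hx'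
      simp [hx']
  · intro π _
    by_cases hf : f (SimpleGraph.map π.toEmbedding G₁) = true
    · simp only [Equiv.coe_toEmbedding] at hf
      simp [hf]
    · simp only [Equiv.coe_toEmbedding] at hf
      simp [hf]

theorem graph_noniso_k_round_soundness {V : Type*} [Fintype V] [DecidableEq V]
    (G₁ G₂ : SimpleGraph V) (h : Nonempty (G₁ ≃g G₂)) (k : ℕ)
    (s : Fin k → SimpleGraph V → Bool) :
    (Finset.univ.filter fun p : Fin k → Bool × Equiv.Perm V =>
        ∀ i, s i (SimpleGraph.map (p i).2.toEmbedding (if (p i).1 then G₁ else G₂))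
              = (p i).1).card =
      Fintype.card (Equiv.Perm V) ^ k := by
  obtain ⟨e⟩ := h
  have key : ∀ i : Fin k,
      (Finset.univ.filter fun x : Bool × Equiv.Perm V =>
        s i (SimpleGraph.map x.2.toEmbedding (if x.1 then G₁ else G₂)) = x.1).card
      = Fintype.card (Equiv.Perm V) := fun i => one_round G₁ G₂ e (s i)
  rw [← Fintype.card_subtype]
  have := Fintype.card_congr
    (Equiv.subtypePiEquivPi (p := fun i (x : Bool × Equiv.Perm V) =>
      s i (SimpleGraph.map x.2.toEmbedding (if x.1 then G₁ else G₂)) = x.1))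
  rw [this, Fintype.card_pi]
  simp only [Fintype.card_subtype, key]
  simp
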